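/- For a Fell bundle ρ: B ↠ Γ, if a, b are sections and the source map s is injective on supp(b), then the convolution ab is defined and ‖ab‖₂ ≤ ‖a‖₂ ‖b‖_∞. If instead supp(a) is a slice (s and r injective on it), then ab is defined and ‖ab‖₂ ≤ ‖a‖_∞ ‖b‖₂. -/

import Mathlib

open Filter Topology

/-- An étale groupoid: a groupoid (partial multiplication encoded via `Option`,
with inverse, source and range maps) carrying a topology making inversion and
multiplication continuous, with open source map and a basis of open slices. -/
structure EtaleGroupoid (Γ : Type*) [TopologicalSpace Γ] where
  mul : Γ → Γ → Option Γ
  inv : Γ → Γ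
  s : Γ → Γ
  r : Γ → Γ
  s_unit : ∀ γ, mul γ (s γ) = some γ
  r_unit : ∀ γ, mul (r γ) γ = some γ
  mul_isSome : ∀ a b, (mul a b).isSome ↔ s a = r b
  inv_mul : ∀ γ, mul (inv γ) γ = some (s γ)
  mul_inv : ∀ γ, mul γ (inv γ) = some (r γ)
  inv_inv : ∀ γ, inv (inv γ) = γ
  s_inv : ∀ γ, s (inv γ) = r γ
  r_inv : ∀ γ, r (inv γ) = s γ
  s_s : ∀ γ, s (s γ) = s γ
  r_s : ∀ γ, r (s γ) = s γ
  inv_s : ∀ γ, inv (s γ) = s γ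
  s_r : ∀ γ, s (r γ) = r γ
  r_r : ∀ γ, r (r γ) = r γ
  inv_r : ∀ γ, inv (r γ) = r γ
  mul_s_s : ∀ γ, mul (s γ) (s γ) = some (s γ)
  mul_r_r : ∀ γ, mul (r γ) (r γ) = some (r γ)
  s_eq_r : ∀ {a b c}, mul a b = some c → s a = r b
  s_mul : ∀ {a b c}, mul a b = some c → s c = s b
  r_mul : ∀ {a b c}, mul a b = some c → r c = r a
  inv_mul_inv : ∀ {a b c}, mul a b = some c → mul (inv b) (inv a) = some (inv c)
  mul_assoc' : ∀ {a b c p q pc}, mul a b = some p → mul b c = some q →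
    mul p c = some pc → mul a q = some pc
  continuous_inv : Continuous inv
  continuous_s : Continuous s
  continuous_r : Continuous r
  isOpenMap_s : IsOpenMap s
  continuous_mul : Continuous fun p : {p : Γ × Γ // (mul p.1 p.2).isSome} =>
    (mul p.1.1 p.1.2).get p.2
  etale : ∀ γ : Γ, ∃ O : Set Γ, IsOpen O ∧ γ ∈ O ∧ Set.InjOn s O ∧ Set.InjOn r O

open scoped ENNReal NNReal

variable {Γ : Type*} [TopologicalSpace Γ]

/-- The unit space `Γ⁰` of an étale groupoid. -/
def EtaleGroupoid.units (G : EtaleGroupoid Γ) : Set Γ := Set.range G.s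

/-- A slice: a subset on which both the source and range maps are injective. -/
def EtaleGroupoid.IsSlice (G : EtaleGroupoid Γ) (B : Set Γ) : Prop :=
  Set.InjOn G.s B ∧ Set.InjOn G.r B

/-- Transport along an equality of base points between fibres. -/
def castE {X : Type*} {E : X → Type*} {α β : X} (h : α = β) (a : E α) : E β := h ▸ a

/-- A Fell bundle over an étale groupoid `G` on `Γ`: a Banach bundle whose
total space `Σ γ, E γ` is a topological *-semigroupoid over `Γ` with bilinear
products, antilinear involution, submultiplicative norm, the C*-identity
`‖b*b‖ = ‖b‖²`, and every `b*b` a square `a*a` of an element of the unit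
fibre over `s(ρ(b))`. -/
structure FellBundle {Γ : Type*} [TopologicalSpace Γ] (G : EtaleGroupoid Γ)
    (E : Γ → Type*) [∀ γ, NormedAddCommGroup (E γ)] [∀ γ, NormedSpace ℂ (E γ)]
    [∀ γ, CompleteSpace (E γ)] [TopologicalSpace (Σ γ, E γ)] where
  mul : ∀ {α β γ : Γ}, G.mul α β = some γ → E α → E β → E γ
  star : ∀ {γ : Γ}, E γ → E (G.inv γ)
  mul_add : ∀ {α β γ} (h : G.mul α β = some γ) (a : E α) (b c : E β),
      mul h a (b + c) = mul h a b + mul h a c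
  add_mul : ∀ {α β γ} (h : G.mul α β = some γ) (a b : E α) (c : E β),
      mul h (a + b) c = mul h a c + mul h b c
  smul_mul : ∀ {α β γ} (h : G.mul α β = some γ) (z : ℂ) (a : E α) (b : E β),
      mul h (z • a) b = z • mul h a b
  mul_smul : ∀ {α β γ} (h : G.mul α β = some γ) (z : ℂ) (a : E α) (b : E β),
      mul h a (z • b) = z • mul h a b
  mul_assoc : ∀ {a b c p q pc} (h1 : G.mul a b = some p) (h2 : G.mul b c = some q)
      (h3 : G.mul p c = some pc) (x : E a) (y : E b) (z : E c),
      mul h3 (mul h1 x y) z = mul (G.mul_assoc' h1 h2 h3) x (mul h2 y z)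
  star_add : ∀ {γ} (a b : E γ), star (a + b) = star a + star b
  star_smul : ∀ {γ} (z : ℂ) (a : E γ), star (z • a) = (starRingEnd ℂ z) • star a
  star_star : ∀ {γ} (a : E γ), star (star a) = castE (G.inv_inv γ).symm a
  star_mul : ∀ {α β γ} (h : G.mul α β = some γ) (a : E α) (b : E β),
      star (mul h a b) = mul (G.inv_mul_inv h) (star b) (star a)
  norm_mul_le : ∀ {α β γ} (h : G.mul α β = some γ) (a : E α) (b : E β),
      ‖mul h a b‖ ≤ ‖a‖ * ‖b‖
  norm_star : ∀ {γ} (a : E γ), ‖star a‖ = ‖a‖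
  cstar : ∀ {γ} (b : E γ), ‖mul (G.inv_mul γ) (star b) b‖ = ‖b‖ ^ 2
  exists_sq : ∀ {γ} (b : E γ), ∃ a : E (G.s γ),
      mul (G.mul_s_s γ) (castE (G.inv_s γ) (star a)) a = mul (G.inv_mul γ) (star b) b
  continuous_proj : Continuous (Sigma.fst : (Σ γ, E γ) → Γ)
  isOpenMap_proj : IsOpenMap (Sigma.fst : (Σ γ, E γ) → Γ)
  continuous_smul : ∀ z : ℂ, Continuous (fun b : Σ γ, E γ => (⟨b.1, z • b.2⟩ : Σ γ, E γ))
  continuous_add : Continuous (fun p : {p : (Σ γ, E γ) × (Σ γ, E γ) // p.1.1 = p.2.1} =>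
      (⟨p.1.1.1, p.1.1.2 + castE p.2.symm p.1.2.2⟩ : Σ γ, E γ))
  usc_norm : UpperSemicontinuous (fun b : Σ γ, E γ => ‖b.2‖)
  zero_lim : ∀ (l : Filter (Σ γ, E γ)) (x : Γ), Tendsto Sigma.fst l (𝓝 x) →
      Tendsto (fun b : Σ γ, E γ => ‖b.2‖) l (𝓝 (0 : ℝ)) →
      l ≤ 𝓝 (⟨x, 0⟩ : Σ γ, E γ)
  continuous_mul' : Continuous
      (fun p : {p : (Σ γ, E γ) × (Σ γ, E γ) // (G.mul p.1.1 p.2.1).isSome} =>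
        (⟨(G.mul p.1.1.1 p.1.2.1).get p.2,
          mul (Option.some_get p.2).symm p.1.1.2 p.1.2.2⟩ : Σ γ, E γ))
  continuous_star' : Continuous (fun b : Σ γ, E γ => (⟨G.inv b.1, star b.2⟩ : Σ γ, E γ))

namespace FellBundle

variable {G : EtaleGroupoid Γ} {E : Γ → Type*}
  [∀ γ, NormedAddCommGroup (E γ)] [∀ γ, NormedSpace ℂ (E γ)]
  [∀ γ, CompleteSpace (E γ)] [TopologicalSpace (Σ γ, E γ)]

/-- The convolution product of two sections: `ab(γ) = Σ_{γ=αβ} a(α)b(β)`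
(a `tsum`, i.e. junk value `0` if the sum does not converge unconditionally). -/
noncomputable def conv (F : FellBundle G E) (a b : ∀ γ, E γ) (γ : Γ) : E γ :=
  ∑' p : {p : Γ × Γ // G.mul p.1 p.2 = some γ}, F.mul p.2 (a p.1.1) (b p.1.2)

/-- The convolution product `ab` is defined: at each `γ` the net of finite
partial sums of `a(α)b(β)` over `γ = αβ` converges in the fibre `E γ`. -/
def ConvDefined (F : FellBundle G E) (a b : ∀ γ, E γ) : Prop :=
  ∀ γ : Γ, Summable (fun p : {p : Γ × Γ // G.mul p.1 p.2 = some γ} =>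
    F.mul p.2 (a p.1.1) (b p.1.2))

/-- The involution of sections: `a*(γ) = a(γ⁻¹)*`. -/
noncomputable def starSec (F : FellBundle G E) (a : ∀ γ, E γ) (γ : Γ) : E γ :=
  castE (G.inv_inv γ) (F.star (a (G.inv γ)))

/-- The pointwise *-square `a(γ)*a(γ) ∈ E (s γ)`. -/
noncomputable def starSq (F : FellBundle G E) (a : ∀ γ, E γ) (γ : Γ) : E (G.s γ) :=
  F.mul (G.inv_mul γ) (F.star (a γ)) (a γ)

/-- The (possibly infinite) supremum norm `‖a‖_∞` of a section. -/
noncomputable def supNorm (_F : FellBundle G E) (a : ∀ γ, E γ) : ℝ≥0∞ :=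
  ⨆ γ : Γ, (‖a γ‖₊ : ℝ≥0∞)

/-- The (possibly infinite) 2-norm
`‖a‖₂ = sup_{x} sup_{F ⊂ Γx finite} √‖Σ_{γ∈F} a(γ)*a(γ)‖`. -/
noncomputable def twoNorm (F : FellBundle G E) (a : ∀ γ, E γ) : ℝ≥0∞ :=
  ⨆ x : Γ, ⨆ s : Finset {γ : Γ // G.s γ = x},
    ENNReal.ofReal (Real.sqrt ‖∑ γ ∈ s, castE γ.prop (F.starSq a γ.val)‖)

/-- The (possibly infinite) 1-norm `‖a‖₁ = sup_{x∈Γ⁰} Σ_{γ∈Γx} ‖a(γ)‖`. -/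
noncomputable def oneNorm (_F : FellBundle G E) (a : ∀ γ, E γ) : ℝ≥0∞ :=
  ⨆ x : Γ, ∑' γ : {γ : Γ // G.s γ = x}, (‖a γ.val‖₊ : ℝ≥0∞)

/-- The (possibly infinite) b-norm
`‖a‖_b = sup {‖af‖₂/‖f‖₂ : f finitely supported}` (with `0/0 = 0`). -/
noncomputable def bNorm (F : FellBundle G E) (a : ∀ γ, E γ) : ℝ≥0∞ :=
  ⨆ f : {f : ∀ γ, E γ // {γ | f γ ≠ 0}.Finite},
    F.twoNorm (F.conv a f.val) / F.twoNorm f.val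

/-- Positivity in the C*-algebra unit fibre `E (s γ)`: being of the form `c*c`. -/
def posAt (F : FellBundle G E) (γ : Γ) (p : E (G.s γ)) : Prop :=
  ∃ c : E (G.s γ), p = F.mul (G.mul_s_s γ) (castE (G.inv_s γ) (F.star c)) c

/-- Positivity in the C*-algebra unit fibre `E (r γ)`: being of the form `c*c`. -/
def posAtR (F : FellBundle G E) (γ : Γ) (p : E (G.r γ)) : Prop :=
  ∃ c : E (G.r γ), p = F.mul (G.mul_r_r γ) (castE (G.inv_r γ) (F.star c)) c

end FellBundle

open Classical in
/-- The 0-restriction `a_Δ` of a section: equal to `a` on `Δ` and `0` elsewhere. -/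
noncomputable def restrictSec {Γ : Type*} {E : Γ → Type*} [∀ γ, NormedAddCommGroup (E γ)]
    (Δ : Set Γ) (a : ∀ γ, E γ) (γ : Γ) : E γ :=
  if γ ∈ Δ then a γ else 0

variable {Γ : Type*} [TopologicalSpace Γ] {G : EtaleGroupoid Γ} {E : Γ → Type*}
  [∀ γ, NormedAddCommGroup (E γ)] [∀ γ, NormedSpace ℂ (E γ)]
  [∀ γ, CompleteSpace (E γ)] [TopologicalSpace (Σ γ, E γ)]

/-! ### Infrastructure -/
set_option linter.unusedSectionVars false

section Infra

variable {Γ' : Type*} [TopologicalSpace Γ'] {G' : EtaleGroupoid Γ'}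

namespace EtaleGroupoid

/-- right cancellation -/
theorem mul_inv_right {a b c : Γ'} (h : G'.mul a b = some c) :
    G'.mul c (G'.inv b) = some a := by
  have h2 : G'.mul b (G'.inv b) = some (G'.r b) := G'.mul_inv b
  have hiso : (G'.mul c (G'.inv b)).isSome := by
    rw [G'.mul_isSome, G'.s_mul h, G'.r_inv]
  obtain ⟨d, hd⟩ := Option.isSome_iff_exists.mp hiso
  have h3 := G'.mul_assoc' h h2 hd
  have h4 : G'.mul a (G'.r b) = some a := by
    have := G'.s_eq_r h
    rw [← this, G'.s_unit]
  rw [h4] at h3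
  exact hd.trans h3.symm

/-- left cancellation -/
theorem inv_mul_left {a b c : Γ'} (h : G'.mul a b = some c) :
    G'.mul (G'.inv a) c = some b := by
  have h1 : G'.mul (G'.inv a) a = some (G'.s a) := G'.inv_mul a
  have h3 : G'.mul (G'.s a) b = some b := by
    rw [G'.s_eq_r h, G'.r_unit]
  exact G'.mul_assoc' h1 h h3

theorem left_unique {a a' b c : Γ'} (h : G'.mul a b = some c) (h' : G'.mul a' b = some c) :
    a = a' := by
  have := (G'.mul_inv_right h).symm.trans (G'.mul_inv_right h')
  exact Option.some_inj.mp this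

theorem right_unique {a b b' c : Γ'} (h : G'.mul a b = some c) (h' : G'.mul a b' = some c) :
    b = b' := by
  have := (G'.inv_mul_left h).symm.trans (G'.inv_mul_left h')
  exact Option.some_inj.mp this

theorem exists_left {b c : Γ'} (h : G'.s c = G'.s b) : ∃ a, G'.mul a b = some c := by
  have hiso : (G'.mul c (G'.inv b)).isSome := by
    rw [G'.mul_isSome, G'.r_inv, h]
  obtain ⟨a, ha⟩ := Option.isSome_iff_exists.mp hiso
  refine ⟨a, ?_⟩
  have := G'.mul_inv_right ha
  rwa [G'.inv_inv] at this

theorem exists_right {a c : Γ'} (h : G'.r c = G'.r a) : ∃ b, G'.mul a b = some c := by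
  have hiso : (G'.mul (G'.inv a) c).isSome := by
    rw [G'.mul_isSome, G'.s_inv, h]
  obtain ⟨b, hb⟩ := Option.isSome_iff_exists.mp hiso
  refine ⟨b, ?_⟩
  have := G'.inv_mul_left hb
  rwa [G'.inv_inv] at this

end EtaleGroupoid

end Infra

section Infra2

variable {Γ : Type*} [TopologicalSpace Γ] {G : EtaleGroupoid Γ} {E : Γ → Type*}
  [∀ γ, NormedAddCommGroup (E γ)] [∀ γ, NormedSpace ℂ (E γ)]
  [∀ γ, CompleteSpace (E γ)] [TopologicalSpace (Σ γ, E γ)]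

@[simp] theorem castE_rfl {α : Γ} (h : α = α) (x : E α) : castE (E := E) h x = x := rfl

theorem castE_castE {α β γ : Γ} (h1 : α = β) (h2 : β = γ) (x : E α) :
    castE (E := E) h2 (castE (E := E) h1 x) = castE (E := E) (h1.trans h2) x := by
  subst h1 h2; rfl

@[simp] theorem castE_add {α β : Γ} (h : α = β) (x y : E α) :
    castE (E := E) h (x + y) = castE (E := E) h x + castE (E := E) h y := by subst h; rfl

@[simp] theorem castE_zero {α β : Γ} (h : α = β) :
    castE (E := E) h (0 : E α) = 0 := by subst h; rfl

@[simp] theorem castE_neg {α β : Γ} (h : α = β) (x : E α) :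
    castE (E := E) h (-x) = -castE (E := E) h x := by subst h; rfl

@[simp] theorem castE_sub {α β : Γ} (h : α = β) (x y : E α) :
    castE (E := E) h (x - y) = castE (E := E) h x - castE (E := E) h y := by subst h; rfl

@[simp] theorem castE_smul {α β : Γ} (h : α = β) (z : ℂ) (x : E α) :
    castE (E := E) h (z • x) = z • castE (E := E) h x := by subst h; rfl

@[simp] theorem norm_castE {α β : Γ} (h : α = β) (x : E α) :
    ‖castE (E := E) h x‖ = ‖x‖ := by subst h; rfl

theorem castE_eq_iff {α β : Γ} (h : α = β) (x : E α) (y : E β) :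
    castE (E := E) h x = y ↔ x = castE (E := E) h.symm y := by subst h; rfl

namespace FellBundle

variable (F : FellBundle G E)

theorem star_castE {α β : Γ} (h : α = β) (x : E α) :
    F.star (castE (E := E) h x) = castE (E := E) (congrArg G.inv h) (F.star x) := by
  subst h; rfl

theorem mul_congr {α α' β β' γ γ' : Γ} (hα : α' = α) (hβ : β' = β) (hγ : γ' = γ)
    (h : G.mul α β = some γ) (h' : G.mul α' β' = some γ') (x : E α') (y : E β') :
    F.mul h (castE (E := E) hα x) (castE (E := E) hβ y) =
      castE (E := E) hγ (F.mul h' x y) := by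
  subst hα hβ hγ; rfl

theorem mul_congr_left {α α' β γ γ' : Γ} (hα : α' = α) (hγ : γ' = γ)
    (h : G.mul α β = some γ) (h' : G.mul α' β = some γ') (x : E α') (y : E β) :
    F.mul h (castE (E := E) hα x) y = castE (E := E) hγ (F.mul h' x y) := by
  subst hα hγ; rfl

theorem mul_congr_right {α β β' γ γ' : Γ} (hβ : β' = β) (hγ : γ' = γ)
    (h : G.mul α β = some γ) (h' : G.mul α β' = some γ') (x : E α) (y : E β') :
    F.mul h x (castE (E := E) hβ y) = castE (E := E) hγ (F.mul h' x y) := by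
  subst hβ hγ; rfl

theorem mul_congr_out {α β γ γ' : Γ} (hγ : γ' = γ)
    (h : G.mul α β = some γ) (h' : G.mul α β = some γ') (x : E α) (y : E β) :
    F.mul h x y = castE (E := E) hγ (F.mul h' x y) := by
  subst hγ; rfl

@[simp] theorem mul_zero' {α β γ : Γ} (h : G.mul α β = some γ) (x : E α) :
    F.mul h x (0 : E β) = 0 := by
  have := F.mul_add h x 0 0
  rw [add_zero] at this
  exact left_eq_add.mp this

@[simp] theorem zero_mul' {α β γ : Γ} (h : G.mul α β = some γ) (y : E β) :
    F.mul h (0 : E α) y = 0 := by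
  have := F.add_mul h 0 0 y
  rw [add_zero] at this
  exact left_eq_add.mp this

@[simp] theorem star_zero' {γ : Γ} : F.star (0 : E γ) = 0 := by
  have := F.star_add (0 : E γ) 0
  rw [add_zero] at this
  exact left_eq_add.mp this

end FellBundle

end Infra2

section FibSection

variable {Γ : Type*} [TopologicalSpace Γ] {G : EtaleGroupoid Γ} {E : Γ → Type*}
  [∀ γ, NormedAddCommGroup (E γ)] [∀ γ, NormedSpace ℂ (E γ)]
  [∀ γ, CompleteSpace (E γ)] [TopologicalSpace (Σ γ, E γ)]

namespace FellBundle

/-- The unit fibre over `s γ` as a carrier for a C*-algebra structure. -/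
@[reducible] def Fib (F : FellBundle G E) (γ : Γ) : Type _ := E (G.s γ)

variable (F : FellBundle G E) (γ : Γ)

instance : NormedAddCommGroup (F.Fib γ) := inferInstanceAs (NormedAddCommGroup (E (G.s γ)))
noncomputable instance : NormedSpace ℂ (F.Fib γ) := inferInstanceAs (NormedSpace ℂ (E (G.s γ)))
instance : CompleteSpace (F.Fib γ) := inferInstanceAs (CompleteSpace (E (G.s γ)))

/-- the *-square `b* b ∈ E (s γ)` of an element of any fibre -/
noncomputable def sq {γ : Γ} (x : E γ) : E (G.s γ) := F.mul (G.inv_mul γ) (F.star x) x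

noncomputable instance : NonUnitalRing (F.Fib γ) :=
  { (inferInstance : AddCommGroup (E (G.s γ))) with
    mul := fun x y => F.mul (G.mul_s_s γ) x y
    left_distrib := fun x y z => F.mul_add _ x y z
    right_distrib := fun x y z => F.add_mul _ x y z
    zero_mul := fun x => F.zero_mul' _ x
    mul_zero := fun x => F.mul_zero' _ x
    mul_assoc := fun x y z => F.mul_assoc _ _ _ x y z }

theorem fib_mul_def (x y : F.Fib γ) :
    x * y = F.mul (G.mul_s_s γ) (x : E (G.s γ)) (y : E (G.s γ)) := rfl

noncomputable instance : StarRing (F.Fib γ) where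
  star x := castE (E := E) (G.inv_s γ) (F.star (x : E (G.s γ)))
  star_involutive x := by
    revert x
    show ∀ x : E (G.s γ),
      castE (E := E) (G.inv_s γ) (F.star (castE (E := E) (G.inv_s γ) (F.star x))) = x
    intro x
    rw [F.star_castE, castE_castE, F.star_star, castE_castE]
    exact castE_rfl _ _
  star_add x y := by
    revert x y
    show ∀ x y : E (G.s γ), castE (E := E) (G.inv_s γ) (F.star (x + y)) =
      castE (E := E) (G.inv_s γ) (F.star x) + castE (E := E) (G.inv_s γ) (F.star y)
    intro x y
    rw [F.star_add, castE_add]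
  star_mul x y := by
    revert x y
    show ∀ x y : E (G.s γ), castE (E := E) (G.inv_s γ) (F.star (F.mul (G.mul_s_s γ) x y)) =
      F.mul (G.mul_s_s γ) (castE (E := E) (G.inv_s γ) (F.star y))
        (castE (E := E) (G.inv_s γ) (F.star x))
    intro x y
    rw [F.star_mul, F.mul_congr (G.inv_s γ) (G.inv_s γ) (G.inv_s γ) (G.mul_s_s γ)
      (G.inv_mul_inv (G.mul_s_s γ)) (F.star y) (F.star x)]

theorem fib_star_def (x : F.Fib γ) :
    Star.star x = castE (E := E) (G.inv_s γ) (F.star (x : E (G.s γ))) := rfl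

theorem fib_star_mul_self (x : F.Fib γ) :
    Star.star x * x = castE (E := E) (G.s_s γ) (F.sq (x : E (G.s γ))) := by
  rw [fib_mul_def, fib_star_def, F.mul_congr_left (G.inv_s γ) (G.s_s γ) (G.mul_s_s γ)
    (G.inv_mul (G.s γ)) (F.star (x : E (G.s γ))) x]
  rfl

noncomputable instance : NonUnitalNormedRing (F.Fib γ) :=
  { (inferInstance : NormedAddCommGroup (F.Fib γ)),
    (inferInstance : NonUnitalRing (F.Fib γ)) with
    norm_mul_le := fun x y => F.norm_mul_le (G.mul_s_s γ) x y }

instance : CStarRing (F.Fib γ) where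
  norm_mul_self_le x := by
    rw [fib_star_mul_self, norm_castE,
      show F.sq (x : E (G.s γ)) = F.mul (G.inv_mul (G.s γ)) (F.star (x : E (G.s γ))) x from rfl,
      F.cstar, pow_two]

instance : IsScalarTower ℂ (F.Fib γ) (F.Fib γ) where
  smul_assoc z x y := by
    show F.mul (G.mul_s_s γ) (z • x) y = z • F.mul (G.mul_s_s γ) x y
    exact F.smul_mul (G.mul_s_s γ) z x y

instance : SMulCommClass ℂ (F.Fib γ) (F.Fib γ) where
  smul_comm z x y := by
    show z • F.mul (G.mul_s_s γ) x y = F.mul (G.mul_s_s γ) x (z • y)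
    exact (F.mul_smul (G.mul_s_s γ) z x y).symm

instance : StarModule ℂ (F.Fib γ) where
  star_smul z x := by
    revert x
    show ∀ x : E (G.s γ), castE (E := E) (G.inv_s γ) (F.star (z • x)) =
      (starRingEnd ℂ z) • castE (E := E) (G.inv_s γ) (F.star x)
    intro x
    rw [F.star_smul, castE_smul]

noncomputable instance : NonUnitalCStarAlgebra (F.Fib γ) where

end FellBundle

end FibSection

section PosSection

set_option linter.unusedSectionVars false

variable {Γ : Type*} [TopologicalSpace Γ] {G : EtaleGroupoid Γ} {E : Γ → Type*}
  [∀ γ, NormedAddCommGroup (E γ)] [∀ γ, NormedSpace ℂ (E γ)]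
  [∀ γ, CompleteSpace (E γ)] [TopologicalSpace (Σ γ, E γ)]

namespace FellBundle

variable (F : FellBundle G E)

/-- identity map into the fibre algebra -/
def toFib (γ₀ : Γ) (p : E (G.s γ₀)) : F.Fib γ₀ := p

/-- The set of transported *-squares in the fibre over `x`. -/
def SqSet (x : Γ) : Set (E x) :=
  {q | ∃ (δ : Γ) (hc : G.s δ = x) (c : E δ), q = castE (E := E) hc (F.sq c)}

/-- Positivity: a sum of transported *-squares. -/
def Pos (x : Γ) (p : E x) : Prop := p ∈ AddSubmonoid.closure (F.SqSet x)

theorem pos_zero (x : Γ) : F.Pos x 0 := zero_mem _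

theorem pos_add {x : Γ} {p q : E x} (hp : F.Pos x p) (hq : F.Pos x q) : F.Pos x (p + q) :=
  add_mem hp hq

theorem pos_sq {δ : Γ} (c : E δ) : F.Pos (G.s δ) (F.sq c) :=
  AddSubmonoid.subset_closure ⟨δ, rfl, c, rfl⟩

theorem pos_sq_cast {δ x : Γ} (hc : G.s δ = x) (c : E δ) :
    F.Pos x (castE (E := E) hc (F.sq c)) :=
  AddSubmonoid.subset_closure ⟨δ, hc, c, rfl⟩

theorem pos_cast {x x' : Γ} (h : x = x') {p : E x} (hp : F.Pos x p) :
    F.Pos x' (castE (E := E) h p) := by subst h; exact hp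

theorem pos_sum {x : Γ} {ι : Type*} (s : Finset ι) (f : ι → E x)
    (hf : ∀ i ∈ s, F.Pos x (f i)) : F.Pos x (∑ i ∈ s, f i) :=
  AddSubmonoid.sum_mem _ hf

theorem sq_cast_eq_star_mul_self {δ γ₀ : Γ} (hc : G.s δ = G.s γ₀) (c : E δ) :
    ∃ d' : F.Fib γ₀, castE (E := E) hc (F.sq c) = Star.star d' * d' := by
  obtain ⟨d, hd⟩ := F.exists_sq c
  refine ⟨F.toFib γ₀ (castE (E := E) hc d), ?_⟩
  have h1 : F.sq c = castE (E := E) (G.s_s δ) (F.sq d) := by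
    rw [show F.sq c = F.mul (G.inv_mul δ) (F.star c) c from rfl, ← hd]
    rw [F.mul_congr_left (G.inv_s δ) (G.s_s δ) (G.mul_s_s δ) (G.inv_mul (G.s δ)) (F.star d) d]
    rfl
  have h2 : F.sq (castE (E := E) hc d) = castE (E := E) (congrArg G.s hc) (F.sq d) := by
    show F.mul (G.inv_mul (G.s γ₀)) (F.star (castE (E := E) hc d)) (castE (E := E) hc d) = _
    rw [F.star_castE, F.mul_congr (congrArg G.inv hc) hc (congrArg G.s hc)
        (G.inv_mul (G.s γ₀)) (G.inv_mul (G.s δ)) (F.star d) d]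
    rfl
  rw [show Star.star (F.toFib γ₀ (castE (E := E) hc d)) * (F.toFib γ₀ (castE (E := E) hc d)) =
      castE (E := E) (G.s_s γ₀) (F.sq (castE (E := E) hc d)) from
    F.fib_star_mul_self γ₀ (F.toFib γ₀ (castE (E := E) hc d))]
  rw [h1, h2, castE_castE, castE_castE]

/-- Positive elements become nonneg in the unitization of the fibre C*-algebra,
for the spectral order. -/
theorem pos_inr_nonneg (γ₀ : Γ) {p : E (G.s γ₀)} (hp : F.Pos (G.s γ₀) p) :
    letI : PartialOrder (Unitization ℂ (F.Fib γ₀)) := CStarAlgebra.spectralOrder _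
    (0 : Unitization ℂ (F.Fib γ₀)) ≤ Unitization.inr (F.toFib γ₀ p) := by
  letI : PartialOrder (Unitization ℂ (F.Fib γ₀)) := CStarAlgebra.spectralOrder _
  haveI : StarOrderedRing (Unitization ℂ (F.Fib γ₀)) := CStarAlgebra.spectralOrderedRing _
  induction hp using AddSubmonoid.closure_induction with
  | mem r hr =>
    obtain ⟨δ, hc, c, rfl⟩ := hr
    obtain ⟨d', hd'⟩ := F.sq_cast_eq_star_mul_self hc c
    rw [show F.toFib γ₀ (castE (E := E) hc (F.sq c)) = Star.star d' * d' from hd']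
    rw [show (Unitization.inr (Star.star d' * d') : Unitization ℂ (F.Fib γ₀)) =
      Star.star (Unitization.inr d') * Unitization.inr d' by
        rw [Unitization.inr_mul, Unitization.inr_star]]
    exact star_mul_self_nonneg _
  | zero =>
    rw [show (Unitization.inr (F.toFib γ₀ 0) : Unitization ℂ (F.Fib γ₀)) = 0 from
      Unitization.inr_zero ℂ]
  | add r r' _ _ h1 h2 =>
    rw [show (Unitization.inr (F.toFib γ₀ (r + r')) : Unitization ℂ (F.Fib γ₀)) =
      Unitization.inr (F.toFib γ₀ r) + Unitization.inr (F.toFib γ₀ r') from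
      Unitization.inr_add ℂ _ _]
    exact add_nonneg h1 h2

/-- If `p` is positive and `q - p` is positive, then `‖p‖ ≤ ‖q‖`. -/
theorem pos_norm_mono (γ₀ : Γ) {p q : E (G.s γ₀)} (hp : F.Pos (G.s γ₀) p)
    (hqp : F.Pos (G.s γ₀) (q - p)) : ‖p‖ ≤ ‖q‖ := by
  letI : PartialOrder (Unitization ℂ (F.Fib γ₀)) := CStarAlgebra.spectralOrder _
  haveI : StarOrderedRing (Unitization ℂ (F.Fib γ₀)) := CStarAlgebra.spectralOrderedRing _
  have h1 := F.pos_inr_nonneg γ₀ hp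
  have h2 := F.pos_inr_nonneg γ₀ hqp
  rw [show (Unitization.inr (F.toFib γ₀ (q - p)) : Unitization ℂ (F.Fib γ₀)) =
    Unitization.inr (F.toFib γ₀ q) - Unitization.inr (F.toFib γ₀ p) from
    Unitization.inr_sub ℂ _ _, sub_nonneg] at h2
  have h4 : ‖(Unitization.inr (F.toFib γ₀ p) : Unitization ℂ (F.Fib γ₀))‖ ≤
      ‖(Unitization.inr (F.toFib γ₀ q) : Unitization ℂ (F.Fib γ₀))‖ :=
    CStarAlgebra.norm_le_norm_of_nonneg_of_le h1 h2
  rw [Unitization.norm_inr, Unitization.norm_inr] at h4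
  exact h4

end FellBundle

end PosSection

section ConjSection

set_option linter.unusedSectionVars false
set_option maxHeartbeats 1000000

variable {Γ : Type*} [TopologicalSpace Γ] {G : EtaleGroupoid Γ} {E : Γ → Type*}
  [∀ γ, NormedAddCommGroup (E γ)] [∀ γ, NormedSpace ℂ (E γ)]
  [∀ γ, CompleteSpace (E γ)] [TopologicalSpace (Σ γ, E γ)]

namespace FellBundle

variable (F : FellBundle G E)

/-- the conjugation `p ↦ y* p y : E (r β) → E (s β)` -/
noncomputable def conjform {β : Γ} (y : E β) : E (G.r β) →+ E (G.s β) :=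
  AddMonoidHom.mk' (fun p => F.mul (G.inv_mul β) (F.star y) (F.mul (G.r_unit β) p y))
    (fun p q => by
      show F.mul (G.inv_mul β) (F.star y) (F.mul (G.r_unit β) (p + q) y) = _
      rw [F.add_mul, F.mul_add])

theorem conjform_apply {β : Γ} (y : E β) (p : E (G.r β)) :
    F.conjform y p = F.mul (G.inv_mul β) (F.star y) (F.mul (G.r_unit β) p y) := rfl

theorem conjform_smul {β : Γ} (y : E β) (z : ℂ) (p : E (G.r β)) :
    F.conjform y (z • p) = z • F.conjform y p := by
  rw [conjform_apply, conjform_apply, F.smul_mul, F.mul_smul]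

theorem norm_conjform_le {β : Γ} (y : E β) (p : E (G.r β)) :
    ‖F.conjform y p‖ ≤ ‖y‖ * ‖p‖ * ‖y‖ := by
  rw [conjform_apply]
  calc ‖F.mul (G.inv_mul β) (F.star y) (F.mul (G.r_unit β) p y)‖
      ≤ ‖F.star y‖ * ‖F.mul (G.r_unit β) p y‖ := F.norm_mul_le _ _ _
    _ ≤ ‖F.star y‖ * (‖p‖ * ‖y‖) := by
        refine mul_le_mul_of_nonneg_left (F.norm_mul_le _ _ _) (norm_nonneg _)
    _ = ‖y‖ * ‖p‖ * ‖y‖ := by rw [F.norm_star]; ring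

/-- `y* (x*x) y = (xy)* (xy)`, transported appropriately. -/
theorem conjform_sq {α β γ : Γ} (h : G.mul α β = some γ) (x : E α) (y : E β) :
    F.conjform y (castE (E := E) (G.s_eq_r h) (F.sq x)) =
      castE (E := E) (G.s_mul h) (F.sq (F.mul h x y)) := by
  have pf2 : G.mul (G.s α) β = some β := by rw [G.s_eq_r h]; exact G.r_unit β
  have hβ2 : G.mul (G.inv α) γ = some β := G.inv_mul_left h
  -- right-hand side: associativity twice
  have e1 : F.sq (F.mul h x y) = F.mul (G.inv_mul γ)
      (F.mul (G.inv_mul_inv h) (F.star y) (F.star x)) (F.mul h x y) := by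
    rw [show F.sq (F.mul h x y) =
      F.mul (G.inv_mul γ) (F.star (F.mul h x y)) (F.mul h x y) from rfl, F.star_mul]
  have e2 := F.mul_assoc (G.inv_mul_inv h) hβ2 (G.inv_mul γ) (F.star y) (F.star x) (F.mul h x y)
  have e3 := F.mul_assoc (G.inv_mul α) h pf2 (F.star x) x y
  -- LHS inner simplification
  rw [conjform_apply,
    F.mul_congr_left (G.s_eq_r h) rfl (G.r_unit β) pf2 (F.sq x) y, castE_rfl]
  rw [e1, e2]
  rw [show F.mul hβ2 (F.star x) (F.mul h x y) =
    F.mul (G.mul_assoc' (G.inv_mul α) h pf2) (F.star x) (F.mul h x y) from rfl, ← e3]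
  rw [show F.mul pf2 (F.mul (G.inv_mul α) (F.star x) x) y = F.mul pf2 (F.sq x) y from rfl]
  exact F.mul_congr_out (G.s_mul h) (G.inv_mul β) _ (F.star y) (F.mul pf2 (F.sq x) y)

theorem star_sq {α : Γ} (x : E α) :
    F.star (F.sq x) = castE (E := E) (G.inv_s α).symm (F.sq x) := by
  rw [show F.sq x = F.mul (G.inv_mul α) (F.star x) x from rfl, F.star_mul, F.star_star]
  rw [F.mul_congr_right (G.inv_inv α).symm (G.inv_s α).symm
    (G.inv_mul_inv (G.inv_mul α)) (G.inv_mul α) (F.star x) x]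

theorem isSelfAdjoint_toFib_sq {α : Γ} (x : E α) :
    IsSelfAdjoint (F.toFib α (F.sq x)) := by
  show Star.star (F.toFib α (F.sq x)) = F.toFib α (F.sq x)
  rw [show Star.star (F.toFib α (F.sq x)) =
    castE (E := E) (G.inv_s α) (F.star (F.sq x)) from rfl, F.star_sq, castE_castE]
  rfl

end FellBundle

end ConjSection

section ThetaSection

set_option linter.unusedSectionVars false
set_option maxHeartbeats 1000000

variable {Γ : Type*} [TopologicalSpace Γ] {G : EtaleGroupoid Γ} {E : Γ → Type*}
  [∀ γ, NormedAddCommGroup (E γ)] [∀ γ, NormedSpace ℂ (E γ)]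
  [∀ γ, CompleteSpace (E γ)] [TopologicalSpace (Σ γ, E γ)]

namespace FellBundle

variable (F : FellBundle G E)

theorem conj3 {α β : Γ} (hsr : G.s α = G.r β) (y : E β) (p : E (G.s α)) :
    F.mul (G.inv_mul β) (F.star (F.mul (G.r_unit β) (castE (E := E) hsr p) y)) y =
      F.conjform y (castE (E := E) hsr (castE (E := E) (G.inv_s α) (F.star p))) := by
  have h₂ : G.mul (G.inv (G.r β)) β = some β := by rw [G.inv_r]; exact G.r_unit β
  have pf : G.mul (G.inv (G.s α)) β = some β := by rw [G.inv_s, hsr]; exact G.r_unit β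
  rw [F.star_mul, F.star_castE]
  have e := F.mul_assoc (G.inv_mul_inv (G.r_unit β)) h₂ (G.inv_mul β) (F.star y)
    (castE (E := E) (congrArg G.inv hsr) (F.star p)) y
  rw [e, conjform_apply, castE_castE]
  have inner1 : F.mul h₂ (castE (E := E) (congrArg G.inv hsr) (F.star p)) y =
      F.mul pf (F.star p) y :=
    (F.mul_congr_left (congrArg G.inv hsr) rfl h₂ pf (F.star p) y).trans (castE_rfl _ _)
  have inner2 : F.mul (G.r_unit β) (castE (E := E) ((G.inv_s α).trans hsr) (F.star p)) y =
      F.mul pf (F.star p) y :=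
    (F.mul_congr_left ((G.inv_s α).trans hsr) rfl (G.r_unit β) pf (F.star p) y).trans
      (castE_rfl _ _)
  rw [inner1, inner2]

theorem conj4 {α β : Γ} (hsr : G.s α = G.r β) (y : E β) (p : E (G.s α)) :
    F.mul (G.inv_mul β) (F.star (F.mul (G.r_unit β) (castE (E := E) hsr p) y))
        (F.mul (G.r_unit β) (castE (E := E) hsr p) y) =
      F.conjform y (castE (E := E) hsr
        (F.mul (G.mul_s_s α) (castE (E := E) (G.inv_s α) (F.star p)) p)) := by
  have h₂ : G.mul (G.inv (G.r β)) β = some β := by rw [G.inv_r]; exact G.r_unit β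
  have h1c : G.mul (G.inv (G.r β)) (G.r β) = some (G.s (G.r β)) := G.inv_mul (G.r β)
  have h3c : G.mul (G.s (G.r β)) β = some β := by rw [G.s_r]; exact G.r_unit β
  have h1' : G.mul (G.inv (G.s α)) (G.s α) = some (G.s (G.s α)) := G.inv_mul (G.s α)
  have h3' : G.mul (G.s (G.s α)) β = some β := by rw [G.s_s, hsr]; exact G.r_unit β
  rw [F.star_mul, F.star_castE]
  have e := F.mul_assoc (G.inv_mul_inv (G.r_unit β)) h₂ (G.inv_mul β) (F.star y)
    (castE (E := E) (congrArg G.inv hsr) (F.star p))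
    (F.mul (G.r_unit β) (castE (E := E) hsr p) y)
  rw [e, conjform_apply]
  congr 1
  -- inner terms
  have e2 := F.mul_assoc h1c (G.r_unit β) h3c
    (castE (E := E) (congrArg G.inv hsr) (F.star p)) (castE (E := E) hsr p) y
  rw [show F.mul h₂ (castE (E := E) (congrArg G.inv hsr) (F.star p))
        (F.mul (G.r_unit β) (castE (E := E) hsr p) y) =
      F.mul (G.mul_assoc' h1c (G.r_unit β) h3c)
        (castE (E := E) (congrArg G.inv hsr) (F.star p))
        (F.mul (G.r_unit β) (castE (E := E) hsr p) y) from rfl, ← e2]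
  rw [F.mul_congr (congrArg G.inv hsr) hsr (congrArg G.s hsr) h1c h1' (F.star p) p]
  rw [F.mul_congr_left (congrArg G.s hsr) rfl h3c h3' (F.mul h1' (F.star p) p) y, castE_rfl]
  -- right side
  rw [F.mul_congr_left (G.inv_s α) (G.s_s α) (G.mul_s_s α) h1' (F.star p) p]
  rw [castE_castE]
  rw [F.mul_congr_left ((G.s_s α).trans hsr) rfl (G.r_unit β) h3' (F.mul h1' (F.star p) p) y,
    castE_rfl]

/-- The conjugation of `star d * d` by `y` is a square. -/
theorem theta_sq {α β : Γ} (hsr : G.s α = G.r β) (y : E β) (d : Unitization ℂ (F.Fib α)) :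
    (Star.star d * d).fst • F.sq y +
      F.conjform y (castE (E := E) hsr (((Star.star d * d).snd : F.Fib α) : E (G.s α))) =
    F.sq (d.fst • y + F.mul (G.r_unit β) (castE (E := E) hsr ((d.snd : F.Fib α) : E (G.s α))) y)
    := by
  set p : E (G.s α) := (d.snd : E (G.s α)) with hp
  set w : E β := F.mul (G.r_unit β) (castE (E := E) hsr p) y with hw
  have hfst : (Star.star d * d).fst = Star.star d.fst * d.fst := by
    rw [Unitization.fst_mul, Unitization.fst_star]
  have hsnd : (((Star.star d * d).snd : F.Fib α) : E (G.s α)) =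
      Star.star d.fst • p + d.fst • (castE (E := E) (G.inv_s α) (F.star p)) +
        F.mul (G.mul_s_s α) (castE (E := E) (G.inv_s α) (F.star p)) p := by
    rw [Unitization.snd_mul, Unitization.snd_star, Unitization.fst_star]
    rfl
  rw [hfst, hsnd]
  -- expand the right-hand side
  rw [show F.sq (d.fst • y + w) =
    F.mul (G.inv_mul β) (F.star (d.fst • y + w)) (d.fst • y + w) from rfl]
  rw [F.star_add, F.star_smul, F.add_mul, F.mul_add, F.mul_add]
  rw [F.smul_mul, F.smul_mul, F.mul_smul, F.mul_smul]
  rw [castE_add, castE_add, castE_smul, castE_smul, map_add, map_add, F.conjform_smul,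
    F.conjform_smul]
  rw [show F.mul (G.inv_mul β) (F.star y) y = F.sq y from rfl]
  rw [smul_smul]
  have t2 : F.mul (G.inv_mul β) (F.star y) w = F.conjform y (castE (E := E) hsr p) := rfl
  have t3 := F.conj3 hsr y p
  have t4 := F.conj4 hsr y p
  rw [← hw] at t3 t4
  rw [t2, t3, t4]
  rw [show (starRingEnd ℂ) d.fst = Star.star d.fst from rfl]
  abel

end FellBundle

end ThetaSection

section Key2Section

set_option linter.unusedSectionVars false
set_option maxHeartbeats 1000000

variable {Γ : Type*} [TopologicalSpace Γ] {G : EtaleGroupoid Γ} {E : Γ → Type*}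
  [∀ γ, NormedAddCommGroup (E γ)] [∀ γ, NormedSpace ℂ (E γ)]
  [∀ γ, CompleteSpace (E γ)] [TopologicalSpace (Σ γ, E γ)]

namespace FellBundle

variable (F : FellBundle G E)

theorem key2 {α β γ : Γ} (h : G.mul α β = some γ) (x : E α) (y : E β) (M : ℝ)
    (hM : ‖x‖ ≤ M) :
    F.Pos (G.s β) (((M : ℂ)^2) • F.sq y -
      F.conjform y (castE (E := E) (G.s_eq_r h) (F.sq x))) := by
  have hsr : G.s α = G.r β := G.s_eq_r h
  letI : PartialOrder (Unitization ℂ (F.Fib α)) := CStarAlgebra.spectralOrder _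
  haveI : StarOrderedRing (Unitization ℂ (F.Fib α)) := CStarAlgebra.spectralOrderedRing _
  set xx : F.Fib α := F.toFib α (F.sq x) with hxx
  -- the additive map Θ
  set theta : Unitization ℂ (F.Fib α) →+ E (G.s β) := AddMonoidHom.mk'
    (fun z => z.fst • F.sq y + F.conjform y (castE (E := E) hsr ((z.snd : F.Fib α) : E (G.s α))))
    (fun z w => by
      rw [Unitization.fst_add, Unitization.snd_add, add_smul]
      rw [show (((z.snd + w.snd : F.Fib α)) : E (G.s α)) =
        ((z.snd : F.Fib α) : E (G.s α)) + ((w.snd : F.Fib α) : E (G.s α)) from rfl]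
      rw [castE_add, map_add]
      abel) with htheta
  -- nonnegativity of `M² - x*x` in the unitization
  have hselfadj : IsSelfAdjoint ((xx : Unitization ℂ (F.Fib α))) :=
    Unitization.isSelfAdjoint_inr.mpr (F.isSelfAdjoint_toFib_sq x)
  have hnorm : ‖(xx : Unitization ℂ (F.Fib α))‖ = ‖x‖^2 := by
    rw [Unitization.norm_inr]
    exact F.cstar x
  have hstar_am : ∀ r : ℝ, Star.star (algebraMap ℝ (Unitization ℂ (F.Fib α)) r) =
      algebraMap ℝ (Unitization ℂ (F.Fib α)) r := by
    intro r
    rw [IsScalarTower.algebraMap_apply ℝ ℂ (Unitization ℂ (F.Fib α)), ← algebraMap_star_comm]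
    congr 1
    rw [Complex.coe_algebraMap, Complex.star_def, Complex.conj_ofReal]
  have hle1 : ((xx : Unitization ℂ (F.Fib α))) ≤
      algebraMap ℝ (Unitization ℂ (F.Fib α)) ‖(xx : Unitization ℂ (F.Fib α))‖ :=
    hselfadj.le_algebraMap_norm_self
  have hnn : (0:ℝ) ≤ M^2 - ‖(xx : Unitization ℂ (F.Fib α))‖ := by
    rw [hnorm]
    nlinarith [norm_nonneg x]
  have hle2 : algebraMap ℝ (Unitization ℂ (F.Fib α)) ‖(xx : Unitization ℂ (F.Fib α))‖ ≤
      algebraMap ℝ (Unitization ℂ (F.Fib α)) (M^2) := by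
    rw [← sub_nonneg, ← map_sub]
    have heq : algebraMap ℝ (Unitization ℂ (F.Fib α))
        (M^2 - ‖(xx : Unitization ℂ (F.Fib α))‖) =
        Star.star (algebraMap ℝ (Unitization ℂ (F.Fib α))
          (Real.sqrt (M^2 - ‖(xx : Unitization ℂ (F.Fib α))‖))) *
        algebraMap ℝ (Unitization ℂ (F.Fib α))
          (Real.sqrt (M^2 - ‖(xx : Unitization ℂ (F.Fib α))‖)) := by
      rw [hstar_am, ← map_mul, Real.mul_self_sqrt hnn]
    rw [heq]
    exact star_mul_self_nonneg _
  have hz : (0 : Unitization ℂ (F.Fib α)) ≤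
      algebraMap ℝ (Unitization ℂ (F.Fib α)) (M^2) - (xx : Unitization ℂ (F.Fib α)) :=
    sub_nonneg.mpr (hle1.trans hle2)
  have hcl := StarOrderedRing.nonneg_iff.mp hz
  -- positivity of theta on the closure
  have hthetapos' : ∀ v ∈ AddSubmonoid.closure
      (Set.range fun s : Unitization ℂ (F.Fib α) => Star.star s * s), F.Pos (G.s β) (theta v) := by
    intro v hv
    induction hv using AddSubmonoid.closure_induction with
    | mem d hd =>
      obtain ⟨d, rfl⟩ := hd
      rw [show theta (Star.star d * d) = (Star.star d * d).fst • F.sq y +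
        F.conjform y (castE (E := E) hsr (((Star.star d * d).snd : F.Fib α) : E (G.s α)))
        from rfl]
      rw [F.theta_sq hsr y d]
      exact F.pos_sq _
    | zero =>
      rw [map_zero]
      exact F.pos_zero _
    | add r r' _ _ h1 h2 =>
      rw [map_add]
      exact F.pos_add h1 h2
  have hthetapos := hthetapos' _ hcl
  -- compute theta of the element
  have hfst : (algebraMap ℝ (Unitization ℂ (F.Fib α)) (M^2) -
      (xx : Unitization ℂ (F.Fib α))).fst = ((M:ℂ)^2) := by
    rw [IsScalarTower.algebraMap_apply ℝ ℂ (Unitization ℂ (F.Fib α)),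
      Unitization.algebraMap_eq_inl]
    have e0 : ((Unitization.inl (algebraMap ℝ ℂ (M^2)) : Unitization ℂ (F.Fib α)) -
        (xx : Unitization ℂ (F.Fib α))).fst = algebraMap ℝ ℂ (M^2) - (0 : ℂ) := rfl
    rw [e0, Complex.coe_algebraMap]
    push_cast
    ring
  have hsnd : ((algebraMap ℝ (Unitization ℂ (F.Fib α)) (M^2) -
      (xx : Unitization ℂ (F.Fib α))).snd : E (G.s α)) = -(F.sq x) := by
    rw [IsScalarTower.algebraMap_apply ℝ ℂ (Unitization ℂ (F.Fib α)),
      Unitization.algebraMap_eq_inl]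
    have e0 : ((((Unitization.inl (algebraMap ℝ ℂ (M^2)) : Unitization ℂ (F.Fib α)) -
        (xx : Unitization ℂ (F.Fib α))).snd : F.Fib α) : E (G.s α)) =
        (0 : E (G.s α)) - F.sq x := rfl
    rw [e0, zero_sub]
  have hval : theta (algebraMap ℝ (Unitization ℂ (F.Fib α)) (M^2) -
      (xx : Unitization ℂ (F.Fib α))) =
      ((M:ℂ)^2) • F.sq y - F.conjform y (castE (E := E) (G.s_eq_r h) (F.sq x)) := by
    rw [show theta (algebraMap ℝ (Unitization ℂ (F.Fib α)) (M^2) -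
        (xx : Unitization ℂ (F.Fib α))) =
      (algebraMap ℝ (Unitization ℂ (F.Fib α)) (M^2) -
        (xx : Unitization ℂ (F.Fib α))).fst • F.sq y +
      F.conjform y (castE (E := E) hsr
        (((algebraMap ℝ (Unitization ℂ (F.Fib α)) (M^2) -
          (xx : Unitization ℂ (F.Fib α))).snd : F.Fib α) : E (G.s α))) from rfl]
    rw [hfst, hsnd, castE_neg, map_neg]
    rw [sub_eq_add_neg]
  rw [← hval]
  exact hthetapos

end FellBundle

end Key2Section

section ConvSection

set_option linter.unusedSectionVars false
set_option maxHeartbeats 1000000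

variable {Γ : Type*} [TopologicalSpace Γ] {G : EtaleGroupoid Γ} {E : Γ → Type*}
  [∀ γ, NormedAddCommGroup (E γ)] [∀ γ, NormedSpace ℂ (E γ)]
  [∀ γ, CompleteSpace (E γ)] [TopologicalSpace (Σ γ, E γ)]

namespace FellBundle

variable (F : FellBundle G E) (a b : ∀ γ, E γ)

theorem sq_zero (γ : Γ) : F.sq (0 : E γ) = 0 := by
  rw [show F.sq (0 : E γ) = F.mul (G.inv_mul γ) (F.star (0 : E γ)) 0 from rfl, F.mul_zero']

theorem summable_single {γ : Γ} (p₀ : {p : Γ × Γ // G.mul p.1 p.2 = some γ})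
    (huniq : ∀ q, q ≠ p₀ → F.mul q.2 (a q.1.1) (b q.1.2) = 0) :
    Summable (fun p : {p : Γ × Γ // G.mul p.1 p.2 = some γ} =>
      F.mul p.2 (a p.1.1) (b p.1.2)) ∧
    F.conv a b γ = F.mul p₀.2 (a p₀.1.1) (b p₀.1.2) := by
  constructor
  · apply summable_of_ne_finset_zero (s := {p₀})
    intro q hq
    exact huniq q (by simpa using hq)
  · exact tsum_eq_single p₀ huniq

theorem summable_zero' {γ : Γ}
    (hall : ∀ q : {p : Γ × Γ // G.mul p.1 p.2 = some γ}, F.mul q.2 (a q.1.1) (b q.1.2) = 0) :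
    Summable (fun p : {p : Γ × Γ // G.mul p.1 p.2 = some γ} =>
      F.mul p.2 (a p.1.1) (b p.1.2)) ∧ F.conv a b γ = 0 := by
  have : (fun p : {p : Γ × Γ // G.mul p.1 p.2 = some γ} =>
      F.mul p.2 (a p.1.1) (b p.1.2)) = fun _ => 0 := funext hall
  rw [show F.conv a b γ =
    ∑' p : {p : Γ × Γ // G.mul p.1 p.2 = some γ}, F.mul p.2 (a p.1.1) (b p.1.2) from rfl, this]
  exact ⟨summable_zero, tsum_zero⟩

/-- Description of the convolution in case 1. -/
theorem conv_case1 (hb : Set.InjOn G.s {γ | b γ ≠ 0}) (γ : Γ) :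
    (Summable (fun p : {p : Γ × Γ // G.mul p.1 p.2 = some γ} =>
      F.mul p.2 (a p.1.1) (b p.1.2))) ∧
    ((∀ β, G.s β = G.s γ → b β = 0) → F.conv a b γ = 0) ∧
    (∀ β₀, G.s β₀ = G.s γ → b β₀ ≠ 0 →
      ∃ (α₀ : Γ) (hm : G.mul α₀ β₀ = some γ), F.conv a b γ = F.mul hm (a α₀) (b β₀)) := by
  by_cases he : ∃ β₀, G.s β₀ = G.s γ ∧ b β₀ ≠ 0
  · obtain ⟨β₀, hs, hb0⟩ := he
    obtain ⟨α₀, hm⟩ := G.exists_left hs.symm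
    have huniq : ∀ q : {p : Γ × Γ // G.mul p.1 p.2 = some γ}, q ≠ ⟨(α₀, β₀), hm⟩ →
        F.mul q.2 (a q.1.1) (b q.1.2) = 0 := by
      intro q hq
      by_contra hne
      have hbq : b q.1.2 ≠ 0 := fun h0 => hne (by rw [h0, F.mul_zero'])
      have hsq : G.s q.1.2 = G.s β₀ := by rw [← G.s_mul q.2]; exact hs.symm
      have h2 : q.1.2 = β₀ := hb hbq hb0 hsq
      have h1 : q.1.1 = α₀ := G.left_unique (h2 ▸ q.2) hm
      exact hq (Subtype.ext (Prod.ext h1 h2))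
    obtain ⟨hsumm, hval⟩ := F.summable_single a b ⟨(α₀, β₀), hm⟩ huniq
    refine ⟨hsumm, fun hz => absurd (hz β₀ hs) hb0, fun β₁ hs1 hb1 => ?_⟩
    have hββ : β₁ = β₀ := hb hb1 hb0 (hs1.trans hs.symm)
    subst hββ
    exact ⟨α₀, hm, hval⟩
  · push_neg at he
    have hall : ∀ q : {p : Γ × Γ // G.mul p.1 p.2 = some γ},
        F.mul q.2 (a q.1.1) (b q.1.2) = 0 := by
      intro q
      have : b q.1.2 = 0 := he q.1.2 (G.s_mul q.2).symm
      rw [this, F.mul_zero']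
    obtain ⟨hsumm, hval⟩ := F.summable_zero' a b hall
    exact ⟨hsumm, fun _ => hval, fun β₀ hs hb0 => absurd (he β₀ hs) hb0⟩

/-- Description of the convolution in case 2. -/
theorem conv_case2 (ha : G.IsSlice {γ | a γ ≠ 0}) (γ : Γ) :
    (Summable (fun p : {p : Γ × Γ // G.mul p.1 p.2 = some γ} =>
      F.mul p.2 (a p.1.1) (b p.1.2))) ∧
    ((¬ ∃ q : {p : Γ × Γ // G.mul p.1 p.2 = some γ}, a q.1.1 ≠ 0 ∧ b q.1.2 ≠ 0) →
      F.conv a b γ = 0) ∧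
    (∀ q₀ : {p : Γ × Γ // G.mul p.1 p.2 = some γ}, a q₀.1.1 ≠ 0 → b q₀.1.2 ≠ 0 →
      F.conv a b γ = F.mul q₀.2 (a q₀.1.1) (b q₀.1.2)) := by
  by_cases he : ∃ q : {p : Γ × Γ // G.mul p.1 p.2 = some γ}, a q.1.1 ≠ 0 ∧ b q.1.2 ≠ 0
  · obtain ⟨q₀, ha0, hb0⟩ := he
    have huniq : ∀ q : {p : Γ × Γ // G.mul p.1 p.2 = some γ}, q ≠ q₀ →
        F.mul q.2 (a q.1.1) (b q.1.2) = 0 := by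
      intro q hq
      by_contra hne
      have haq : a q.1.1 ≠ 0 := fun h0 => hne (by rw [h0, F.zero_mul'])
      have hrq : G.r q.1.1 = G.r q₀.1.1 := by rw [← G.r_mul q.2, ← G.r_mul q₀.2]
      have h1 : q.1.1 = q₀.1.1 := ha.2 haq ha0 hrq
      have h2 : q.1.2 = q₀.1.2 := G.right_unique (h1 ▸ q.2) q₀.2
      exact hq (Subtype.ext (Prod.ext h1 h2))
    obtain ⟨hsumm, hval⟩ := F.summable_single a b q₀ huniq
    refine ⟨hsumm, fun hz => absurd ⟨q₀, ha0, hb0⟩ hz, fun q₁ ha1 hb1 => ?_⟩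
    have hrq : G.r q₁.1.1 = G.r q₀.1.1 := by rw [← G.r_mul q₁.2, ← G.r_mul q₀.2]
    have h1 : q₁.1.1 = q₀.1.1 := ha.2 ha1 ha0 hrq
    have h2 : q₁.1.2 = q₀.1.2 := G.right_unique (h1 ▸ q₁.2) q₀.2
    have hq : q₁ = q₀ := Subtype.ext (Prod.ext h1 h2)
    rw [hq]
    exact hval
  · push_neg at he
    have hall : ∀ q : {p : Γ × Γ // G.mul p.1 p.2 = some γ},
        F.mul q.2 (a q.1.1) (b q.1.2) = 0 := by
      intro q
      by_cases haq : a q.1.1 = 0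
      · rw [haq, F.zero_mul']
      · rw [he q haq, F.mul_zero']
    obtain ⟨hsumm, hval⟩ := F.summable_zero' a b hall
    refine ⟨hsumm, fun _ => hval, fun q₀ ha0 hb0 => ?_⟩
    by_cases haq : a q₀.1.1 = 0
    · exact absurd haq ha0
    · exact absurd (he q₀ haq) hb0

end FellBundle

end ConvSection

set_option linter.unusedSectionVars false
set_option maxHeartbeats 2000000

theorem castE_sum {Γ : Type*} {E : Γ → Type*} [∀ γ, NormedAddCommGroup (E γ)]
    {α β : Γ} (h : α = β) {ι : Type*} (s : Finset ι) (f : ι → E α) :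
    castE (E := E) h (∑ i ∈ s, f i) = ∑ i ∈ s, castE (E := E) h (f i) := by
  subst h; rfl

/-- If `s` is injective on `supp b` then `ab` is defined and
`‖ab‖₂ ≤ ‖a‖₂‖b‖_∞`; if `supp a` is a slice then `ab` is defined and
`‖ab‖₂ ≤ ‖a‖_∞‖b‖₂`. -/
theorem stmt14 (F : FellBundle G E) (a b : ∀ γ, E γ) :
    (Set.InjOn G.s {γ | b γ ≠ 0} →
      F.ConvDefined a b ∧ F.twoNorm (F.conv a b) ≤ F.twoNorm a * F.supNorm b) ∧
    (G.IsSlice {γ | a γ ≠ 0} →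
      F.ConvDefined a b ∧ F.twoNorm (F.conv a b) ≤ F.supNorm a * F.twoNorm b) := by
  classical
  constructor
  · -- Part 1
    intro hb
    have hcase := fun γ => F.conv_case1 a b hb γ
    refine ⟨fun γ => (hcase γ).1, ?_⟩
    rw [show F.twoNorm (F.conv a b) = ⨆ x : Γ, ⨆ s : Finset {γ : Γ // G.s γ = x},
      ENNReal.ofReal (Real.sqrt ‖∑ γ ∈ s,
        castE (E := E) γ.prop (F.starSq (F.conv a b) γ.val)‖) from rfl]
    refine iSup_le fun x => iSup_le fun S => ?_
    by_cases hbx : ∃ β₀, G.s β₀ = x ∧ b β₀ ≠ 0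
    · obtain ⟨β₀, hsx, hb0⟩ := hbx
      have hav : ∀ γS : {γ : Γ // G.s γ = x}, ∃ (α₀ : Γ) (hm : G.mul α₀ β₀ = some γS.val),
          F.conv a b γS.val = F.mul hm (a α₀) (b β₀) :=
        fun γS => (hcase γS.val).2.2 β₀ (hsx.trans γS.prop.symm) hb0
      choose A hm hconv using hav
      have hterm : ∀ γS : {γ : Γ // G.s γ = x},
          castE (E := E) γS.prop (F.starSq (F.conv a b) γS.val) =
          castE (E := E) hsx (F.conjform (b β₀)
            (castE (E := E) (G.s_eq_r (hm γS)) (F.sq (a (A γS))))) := by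
        intro γS
        rw [F.conjform_sq (hm γS) (a (A γS)) (b β₀), castE_castE]
        rw [show F.starSq (F.conv a b) γS.val = F.sq (F.conv a b γS.val) from rfl,
          hconv γS]
      rw [Finset.sum_congr rfl (fun γS _ => hterm γS), ← castE_sum, ← map_sum]
      set Q : E (G.r β₀) := ∑ γS ∈ S, castE (E := E) (G.s_eq_r (hm γS)) (F.sq (a (A γS)))
        with hQ
      rw [norm_castE]
      -- bound the norm
      have hbd : ‖F.conjform (b β₀) Q‖ ≤ ‖b β₀‖ * ‖Q‖ * ‖b β₀‖ := F.norm_conjform_le _ _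
      have hsq1 : Real.sqrt ‖F.conjform (b β₀) Q‖ ≤ ‖b β₀‖ * Real.sqrt ‖Q‖ := by
        calc Real.sqrt ‖F.conjform (b β₀) Q‖ ≤ Real.sqrt (‖b β₀‖ * ‖Q‖ * ‖b β₀‖) :=
              Real.sqrt_le_sqrt hbd
          _ = Real.sqrt (‖b β₀‖^2 * ‖Q‖) := by ring_nf
          _ = ‖b β₀‖ * Real.sqrt ‖Q‖ := by
              rw [Real.sqrt_mul (sq_nonneg _), Real.sqrt_sq (norm_nonneg _)]
      -- to twoNorm a via the image finset
      have hinj : ∀ γ1 ∈ S, ∀ γ2 ∈ S,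
          (⟨A γ1, G.s_eq_r (hm γ1)⟩ : {δ : Γ // G.s δ = G.r β₀}) =
          ⟨A γ2, G.s_eq_r (hm γ2)⟩ → γ1 = γ2 := by
        intro γ1 _ γ2 _ heq
        have hA : A γ1 = A γ2 := congrArg Subtype.val heq
        have h1 := hm γ1
        rw [hA] at h1
        exact Subtype.ext (Option.some_inj.mp (h1.symm.trans (hm γ2)))
      have hTsum : ∑ t ∈ S.image (fun γS => (⟨A γS, G.s_eq_r (hm γS)⟩ :
          {δ : Γ // G.s δ = G.r β₀})), castE (E := E) t.prop (F.starSq a t.val) = Q :=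
        Finset.sum_image hinj
      have h2a : ENNReal.ofReal (Real.sqrt ‖Q‖) ≤ F.twoNorm a := by
        rw [← hTsum]
        refine le_trans (le_iSup (fun s : Finset {δ : Γ // G.s δ = G.r β₀} =>
          ENNReal.ofReal (Real.sqrt ‖∑ t ∈ s, castE (E := E) t.prop (F.starSq a t.val)‖)) _)
          ?_
        exact le_iSup (fun x' : Γ => ⨆ s : Finset {δ : Γ // G.s δ = x'},
          ENNReal.ofReal (Real.sqrt ‖∑ t ∈ s, castE (E := E) t.prop (F.starSq a t.val)‖)) _
      have h2b : ENNReal.ofReal ‖b β₀‖ ≤ F.supNorm b := by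
        rw [← coe_nnnorm, ENNReal.ofReal_coe_nnreal]
        exact le_iSup (fun δ : Γ => (‖b δ‖₊ : ℝ≥0∞)) β₀
      calc ENNReal.ofReal (Real.sqrt ‖F.conjform (b β₀) Q‖)
          ≤ ENNReal.ofReal (‖b β₀‖ * Real.sqrt ‖Q‖) := ENNReal.ofReal_le_ofReal hsq1
        _ = ENNReal.ofReal ‖b β₀‖ * ENNReal.ofReal (Real.sqrt ‖Q‖) :=
            ENNReal.ofReal_mul (norm_nonneg _)
        _ ≤ F.supNorm b * F.twoNorm a := mul_le_mul' h2b h2a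
        _ = F.twoNorm a * F.supNorm b := mul_comm _ _
    · push_neg at hbx
      have hz : ∀ γS : {γ : Γ // G.s γ = x}, γS ∈ S →
          castE (E := E) γS.prop (F.starSq (F.conv a b) γS.val) = 0 := by
        intro γS _
        have hc0 : F.conv a b γS.val = 0 :=
          (hcase γS.val).2.1 (fun β hsb => hbx β (hsb.trans γS.prop))
        rw [show F.starSq (F.conv a b) γS.val = F.sq (F.conv a b γS.val) from rfl, hc0,
          F.sq_zero, castE_zero]
      rw [Finset.sum_eq_zero hz, norm_zero, Real.sqrt_zero]
      simp
  · -- Part 2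
    intro hsl
    have hcase := fun γ => F.conv_case2 a b hsl γ
    refine ⟨fun γ => (hcase γ).1, ?_⟩
    by_cases hfin : F.supNorm a = ⊤
    · by_cases hb0 : F.twoNorm b = 0
      · -- b vanishes
        have hbz : ∀ β, b β = 0 := by
          intro β
          have h1 : ENNReal.ofReal (Real.sqrt ‖∑ γ ∈ ({⟨β, rfl⟩} :
              Finset {γ : Γ // G.s γ = G.s β}), castE (E := E) γ.prop (F.starSq b γ.val)‖)
              ≤ F.twoNorm b := by
            refine le_trans (le_iSup (fun s : Finset {γ : Γ // G.s γ = G.s β} =>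
              ENNReal.ofReal (Real.sqrt ‖∑ t ∈ s,
                castE (E := E) t.prop (F.starSq b t.val)‖)) _) ?_
            exact le_iSup (fun x' : Γ => ⨆ s : Finset {δ : Γ // G.s δ = x'},
              ENNReal.ofReal (Real.sqrt ‖∑ t ∈ s, castE (E := E) t.prop (F.starSq b t.val)‖)) _
          rw [hb0, le_zero_iff, Finset.sum_singleton, ENNReal.ofReal_eq_zero] at h1
          have h2 : ‖castE (E := E) rfl (F.starSq b β)‖ = 0 :=
            le_antisymm (by
              have := Real.sqrt_nonneg ‖castE (E := E) rfl (F.starSq b β)‖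
              have h3 : Real.sqrt ‖castE (E := E) rfl (F.starSq b β)‖ = 0 := le_antisymm h1 this
              have := Real.sqrt_eq_zero'.mp h3
              simpa using this) (norm_nonneg _)
          rw [castE_rfl] at h2
          have h4 : ‖b β‖^2 = 0 := by rw [← F.cstar (b β)]; exact h2
          have h5 : ‖b β‖ = 0 := by
            have := pow_eq_zero_iff (n := 2) (by norm_num) |>.mp h4
            exact this
          exact norm_eq_zero.mp h5
        have hcz : ∀ γ, F.conv a b γ = 0 := fun γ => (hcase γ).2.1
          (by rintro ⟨qq, _, hbq⟩; exact hbq (hbz _))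
        have h0 : F.twoNorm (F.conv a b) = 0 := by
          refine le_antisymm ?_ (zero_le)
          rw [show F.twoNorm (F.conv a b) = ⨆ x : Γ, ⨆ s : Finset {γ : Γ // G.s γ = x},
            ENNReal.ofReal (Real.sqrt ‖∑ γ ∈ s,
              castE (E := E) γ.prop (F.starSq (F.conv a b) γ.val)‖) from rfl]
          refine iSup_le fun x => iSup_le fun S => ?_
          have hz : ∀ γS : {γ : Γ // G.s γ = x}, γS ∈ S →
              castE (E := E) γS.prop (F.starSq (F.conv a b) γS.val) = 0 := by
            intro γS _
            rw [show F.starSq (F.conv a b) γS.val = F.sq (F.conv a b γS.val) from rfl,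
              hcz, F.sq_zero, castE_zero]
          rw [Finset.sum_eq_zero hz, norm_zero, Real.sqrt_zero]
          simp
        rw [h0]
        exact zero_le
      · rw [hfin, ENNReal.top_mul hb0]
        exact le_top
    · set M := (F.supNorm a).toReal with hMdef
      have hM0 : 0 ≤ M := ENNReal.toReal_nonneg
      have hMa : ∀ δ, ‖a δ‖ ≤ M := by
        intro δ
        have h1 : (‖a δ‖₊ : ℝ≥0∞) ≤ F.supNorm a := le_iSup (fun δ : Γ => (‖a δ‖₊ : ℝ≥0∞)) δ
        have h2 := ENNReal.toReal_mono hfin h1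
        simpa using h2
      rw [show F.twoNorm (F.conv a b) = ⨆ x : Γ, ⨆ s : Finset {γ : Γ // G.s γ = x},
        ENNReal.ofReal (Real.sqrt ‖∑ γ ∈ s,
          castE (E := E) γ.prop (F.starSq (F.conv a b) γ.val)‖) from rfl]
      refine iSup_le fun x => iSup_le fun S => ?_
      set S' := S.filter (fun γS => ∃ q : {p : Γ × Γ // G.mul p.1 p.2 = some γS.val},
        a q.1.1 ≠ 0 ∧ b q.1.2 ≠ 0) with hS'
      have hsum_eq : ∑ γS ∈ S', castE (E := E) γS.prop (F.starSq (F.conv a b) γS.val) =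
          ∑ γS ∈ S, castE (E := E) γS.prop (F.starSq (F.conv a b) γS.val) := by
        refine Finset.sum_filter_of_ne ?_
        intro γS _ hne
        by_contra hnotex
        have hc0 : F.conv a b γS.val = 0 := (hcase γS.val).2.1 hnotex
        refine hne ?_
        rw [show F.starSq (F.conv a b) γS.val = F.sq (F.conv a b γS.val) from rfl, hc0,
          F.sq_zero, castE_zero]
      rw [← hsum_eq]
      rcases Finset.eq_empty_or_nonempty S' with hS'e | hS'ne
      · rw [hS'e, Finset.sum_empty, norm_zero, Real.sqrt_zero]
        simp
      · obtain ⟨γS₀, hγS₀⟩ := hS'ne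
        obtain ⟨γ₀v, hx⟩ := γS₀
        subst hx
        -- data on S'
        have hdata : ∀ γm : {γS : {γ : Γ // G.s γ = G.s γ₀v} // γS ∈ S'},
            ∃ q : {p : Γ × Γ // G.mul p.1 p.2 = some γm.val.val},
              a q.1.1 ≠ 0 ∧ b q.1.2 ≠ 0 :=
          fun γm => (Finset.mem_filter.mp γm.prop).2
        choose q ha0 hb0' using hdata
        have hconv : ∀ γm, F.conv a b γm.val.val =
            F.mul (q γm).2 (a (q γm).1.1) (b (q γm).1.2) :=
          fun γm => (hcase γm.val.val).2.2 (q γm) (ha0 γm) (hb0' γm)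
        have pfB : ∀ γm, G.s (q γm).1.2 = G.s γ₀v :=
          fun γm => (G.s_mul (q γm).2).symm.trans γm.val.prop
        -- positivity per term
        have hposterm : ∀ γm, F.Pos (G.s γ₀v)
            (((M:ℂ)^2) • castE (E := E) (pfB γm) (F.sq (b (q γm).1.2)) -
              castE (E := E) γm.val.prop (F.sq (F.conv a b γm.val.val))) := by
          intro γm
          have hk := F.key2 (q γm).2 (a (q γm).1.1) (b (q γm).1.2) M (hMa _)
          rw [F.conjform_sq] at hk
          have hk2 := F.pos_cast (pfB γm) hk
          rw [castE_sub, castE_smul, castE_castE] at hk2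
          rw [hconv γm]
          exact hk2
        set S1 : E (G.s γ₀v) :=
          ∑ γS ∈ S', castE (E := E) γS.prop (F.sq (F.conv a b γS.val)) with hS1
        have hposS1 : F.Pos (G.s γ₀v) S1 :=
          F.pos_sum S' _ (fun γS _ => F.pos_sq_cast γS.prop (F.conv a b γS.val))
        set Qb : E (G.s γ₀v) :=
          ∑ γm ∈ S'.attach, castE (E := E) (pfB γm) (F.sq (b (q γm).1.2)) with hQb
        have hposdiff : F.Pos (G.s γ₀v) (((M:ℂ)^2) • Qb - S1) := by
          have hp := F.pos_sum S'.attach _ (fun γm _ => hposterm γm)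
          rw [Finset.sum_sub_distrib, ← Finset.smul_sum] at hp
          rw [Finset.sum_attach S' (fun γS =>
            castE (E := E) γS.prop (F.sq (F.conv a b γS.val)))] at hp
          exact hp
        have hnorm1 : ‖S1‖ ≤ ‖((M:ℂ)^2) • Qb‖ := F.pos_norm_mono γ₀v hposS1 hposdiff
        have hnorm2 : ‖((M:ℂ)^2) • Qb‖ = M^2 * ‖Qb‖ := by
          rw [norm_smul, norm_pow, Complex.norm_real, Real.norm_eq_abs, abs_of_nonneg hM0]
        -- reindex to a finset for twoNorm b
        have hinj : ∀ γm ∈ S'.attach, ∀ γm' ∈ S'.attach,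
            (⟨(q γm).1.2, pfB γm⟩ : {δ : Γ // G.s δ = G.s γ₀v}) =
            ⟨(q γm').1.2, pfB γm'⟩ → γm = γm' := by
          intro γm _ γm' _ heq
          have hβ : (q γm).1.2 = (q γm').1.2 := congrArg Subtype.val heq
          have hs2 : G.s (q γm).1.1 = G.s (q γm').1.1 := by
            rw [G.s_eq_r (q γm).2, G.s_eq_r (q γm').2, hβ]
          have hα : (q γm).1.1 = (q γm').1.1 := hsl.1 (ha0 γm) (ha0 γm') hs2
          have hval : γm.val.val = γm'.val.val := by
            have h1 := (q γm).2
            rw [hα, hβ] at h1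
            exact Option.some_inj.mp (h1.symm.trans (q γm').2)
          exact Subtype.ext (Subtype.ext hval)
        have hTsum : ∑ t ∈ S'.attach.image (fun γm => (⟨(q γm).1.2, pfB γm⟩ :
            {δ : Γ // G.s δ = G.s γ₀v})),
            castE (E := E) t.prop (F.starSq b t.val) = Qb :=
          Finset.sum_image hinj
        have h2b : ENNReal.ofReal (Real.sqrt ‖Qb‖) ≤ F.twoNorm b := by
          rw [← hTsum]
          refine le_trans (le_iSup (fun s : Finset {δ : Γ // G.s δ = G.s γ₀v} =>
            ENNReal.ofReal (Real.sqrt ‖∑ t ∈ s,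
              castE (E := E) t.prop (F.starSq b t.val)‖)) _) ?_
          exact le_iSup (fun x' : Γ => ⨆ s : Finset {δ : Γ // G.s δ = x'},
            ENNReal.ofReal (Real.sqrt ‖∑ t ∈ s, castE (E := E) t.prop (F.starSq b t.val)‖)) _
        have hsq1 : Real.sqrt ‖S1‖ ≤ M * Real.sqrt ‖Qb‖ := by
          calc Real.sqrt ‖S1‖ ≤ Real.sqrt (M^2 * ‖Qb‖) := by
                rw [← hnorm2]; exact Real.sqrt_le_sqrt hnorm1
            _ = M * Real.sqrt ‖Qb‖ := by
                rw [Real.sqrt_mul (sq_nonneg _), Real.sqrt_sq hM0]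
        calc ENNReal.ofReal (Real.sqrt ‖∑ γS ∈ S',
              castE (E := E) γS.prop (F.starSq (F.conv a b) γS.val)‖)
            = ENNReal.ofReal (Real.sqrt ‖S1‖) := rfl
          _ ≤ ENNReal.ofReal (M * Real.sqrt ‖Qb‖) := ENNReal.ofReal_le_ofReal hsq1
          _ = ENNReal.ofReal M * ENNReal.ofReal (Real.sqrt ‖Qb‖) :=
              ENNReal.ofReal_mul hM0
          _ ≤ F.supNorm a * F.twoNorm b := by
              refine mul_le_mul' ?_ h2b
              rw [hMdef, ENNReal.ofReal_toReal hfin]
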